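/- Let n ≥ 20 and let v = (v_1, ..., v_n) be a proper (1/n)-thin sequence in R^2 whose edge sequence is n²-decreasing. Then for every index p with 1 < p < n: (1) β(v_1, v_p, v_n) ≤ Σ_{k=2}^{p} β_k + 0.1·Σ_{k=p+1}^{n-1} β_k, and (2) β(v_1, v_p, v_n) ≥ 0.9·Σ_{k=2}^{p} β_k, where β_k = β(v_{k-1}, v_k, v_{k+1}). -/

import Mathlib

open EuclideanGeometry Real Finset

noncomputable section

/-- Points of the plane. -/
abbrev Pt : Type := EuclideanSpace ℝ (Fin 2)

/-- `Δ(a,b,c)`: the oriented area of the parallelepiped spanned by `a - b` and `c - b`. -/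
def tdet (a b c : Pt) : ℝ :=
  (a 0 - b 0) * (c 1 - b 1) - (a 1 - b 1) * (c 0 - b 0)

/-- `β(a,b,c) = π - ∠(a,b,c)`, where `∠` is the unsigned angle at `b`. -/
def beta (a b c : Pt) : ℝ := Real.pi - EuclideanGeometry.angle a b c

/-- Cyclic successor on `{1, …, n}`. -/
def cyc (n j : ℕ) : ℕ := if j = n then 1 else j + 1

/-- Cyclic predecessor on `{1, …, n}`. -/
def cycPred (n j : ℕ) : ℕ := if j = 1 then n else j - 1

/-- `(v 1, …, v n)` is a proper sequence: `Δ(v₁,v₂,v₃) > 0` and every segment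
`conv{v_j, v_{j+1}}` (indices cyclic) is an edge of the convex hull of the points,
i.e. it is the set of maximizers of some linear functional over the points. -/
def Proper (n : ℕ) (v : ℕ → Pt) : Prop :=
  0 < tdet (v 1) (v 2) (v 3) ∧
  ∀ j, 1 ≤ j → j ≤ n →
    ∃ (ℓ : Pt →ₗ[ℝ] ℝ) (c : ℝ), ℓ (v j) = c ∧ ℓ (v (cyc n j)) = c ∧
      ∀ k, 1 ≤ k → k ≤ n → k ≠ j → k ≠ cyc n j → ℓ (v k) < c

/-- `(v 1, …, v n)` is `θ`-thin. -/
def Thin (n : ℕ) (v : ℕ → Pt) (θ : ℝ) : Prop :=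
  ∑ k ∈ Finset.Icc 2 (n - 1), beta (v (k - 1)) (v k) (v (k + 1)) ≤ θ

/-- The edge sequence of `(v 1, …, v n)` is `h`-decreasing. -/
def EdgeDecr (n : ℕ) (v : ℕ → Pt) (h : ℝ) : Prop :=
  ∀ k, 1 ≤ k → k + 2 ≤ n → h * dist (v (k + 1)) (v (k + 2)) ≤ dist (v k) (v (k + 1))

namespace Stmt13Aux

def ip (x y : Pt) : ℝ := x 0 * y 0 + x 1 * y 1
def cr (x y : Pt) : ℝ := x 1 * y 0 - x 0 * y 1

lemma inner_eq (x y : Pt) : (inner ℝ x y : ℝ) = ip x y := by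
  simp [PiLp.inner_apply, RCLike.inner_apply, Fin.sum_univ_two, ip, mul_comm]

lemma norm_sq_eq (x : Pt) : ‖x‖ ^ 2 = ip x x := by
  rw [← inner_eq]; exact (real_inner_self_eq_norm_sq x).symm

lemma ip_self_pos {x : Pt} (hx : x ≠ 0) : 0 < ip x x := by
  rw [← norm_sq_eq]; have := norm_pos_iff.mpr hx; positivity

lemma ip_pos_ne_zero₁ {u w : Pt} (h : 0 < ip u w) : u ≠ 0 := by rintro rfl; simp [ip] at h
lemma ip_pos_ne_zero₂ {u w : Pt} (h : 0 < ip u w) : w ≠ 0 := by rintro rfl; simp [ip] at h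

lemma lagrange (u a b : Pt) : ip u a * ip u b + cr u a * cr u b = ip a b * ip u u := by
  simp only [ip, cr]; ring

lemma lagrange' (u a b : Pt) : ip u a * cr u b - cr u a * ip u b = cr a b * ip u u := by
  simp only [ip, cr]; ring

lemma mixed (u w b : Pt) : ip u b * ip w w = ip u w * ip w b - cr u w * cr w b := by
  simp only [ip, cr]; ring

lemma pyth (u w : Pt) : ip u w ^ 2 + cr u w ^ 2 = (‖u‖ * ‖w‖) ^ 2 := by
  have := lagrange u w w
  have e1 : ip w w = ‖w‖^2 := (norm_sq_eq w).symm
  have e2 : ip u u = ‖u‖^2 := (norm_sq_eq u).symm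
  nlinarith

lemma cr_le (u w : Pt) : |cr u w| ≤ ‖u‖ * ‖w‖ := by
  have h := pyth u w
  have h1 : (0:ℝ) ≤ ‖u‖ * ‖w‖ := by positivity
  nlinarith [sq_abs (cr u w), abs_nonneg (cr u w), sq_nonneg (ip u w)]

lemma ip_le (u w : Pt) : |ip u w| ≤ ‖u‖ * ‖w‖ := by
  have h := pyth u w
  have h1 : (0:ℝ) ≤ ‖u‖ * ‖w‖ := by positivity
  nlinarith [sq_abs (ip u w), abs_nonneg (ip u w), sq_nonneg (cr u w)]

/-- signed angle of `w` relative to `u` -/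
def phi (u w : Pt) : ℝ := Real.arcsin (cr u w / (‖u‖ * ‖w‖))

lemma cr_abs_le (u w : Pt) : |cr u w / (‖u‖ * ‖w‖)| ≤ 1 := by
  rcases eq_or_ne u 0 with rfl | hu
  · simp [cr]
  rcases eq_or_ne w 0 with rfl | hw
  · simp [cr]
  have hu' : (0:ℝ) < ‖u‖ := norm_pos_iff.mpr hu
  have hw' : (0:ℝ) < ‖w‖ := norm_pos_iff.mpr hw
  rw [abs_div, div_le_one (by positivity), abs_of_pos (by positivity : (0:ℝ) < ‖u‖*‖w‖)]
  exact cr_le u w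

lemma sin_phi (u w : Pt) : Real.sin (phi u w) = cr u w / (‖u‖ * ‖w‖) := by
  have := cr_abs_le u w
  exact Real.sin_arcsin (by cases abs_le.mp this; linarith) (by cases abs_le.mp this; linarith)

lemma cos_phi {u w : Pt} (h : 0 < ip u w) : Real.cos (phi u w) = ip u w / (‖u‖ * ‖w‖) := by
  have hu' : (0:ℝ) < ‖u‖ := norm_pos_iff.mpr (ip_pos_ne_zero₁ h)
  have hw' : (0:ℝ) < ‖w‖ := norm_pos_iff.mpr (ip_pos_ne_zero₂ h)
  rw [phi, Real.cos_arcsin]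
  have hden : (0:ℝ) < ‖u‖ * ‖w‖ := by positivity
  have key : 1 - (cr u w / (‖u‖ * ‖w‖)) ^ 2 = (ip u w / (‖u‖ * ‖w‖)) ^ 2 := by
    have h1 := pyth u w
    field_simp
    nlinarith
  rw [key, Real.sqrt_sq_eq_abs, abs_div, abs_of_pos h, abs_of_pos hden]

lemma phi_lt {u w : Pt} (h : 0 < ip u w) : |phi u w| < π / 2 := by
  have hu' : (0:ℝ) < ‖u‖ := norm_pos_iff.mpr (ip_pos_ne_zero₁ h)
  have hw' : (0:ℝ) < ‖w‖ := norm_pos_iff.mpr (ip_pos_ne_zero₂ h)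
  have hden : (0:ℝ) < ‖u‖ * ‖w‖ := by positivity
  have h1 : |cr u w / (‖u‖ * ‖w‖)| < 1 := by
    rw [abs_div, div_lt_one (by positivity), abs_of_pos hden]
    have h2 := pyth u w
    nlinarith [sq_abs (cr u w), abs_nonneg (cr u w)]
  rw [abs_lt] at h1 ⊢
  exact ⟨neg_pi_div_two_lt_arcsin.mpr h1.1, arcsin_lt_pi_div_two.mpr h1.2⟩

lemma sin_diff {u a b : Pt} (ha : 0 < ip u a) (hb : 0 < ip u b) :
    Real.sin (phi u b - phi u a) = cr a b / (‖a‖ * ‖b‖) := by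
  have hu' : (0:ℝ) < ‖u‖ := norm_pos_iff.mpr (ip_pos_ne_zero₁ ha)
  have ha' : (0:ℝ) < ‖a‖ := norm_pos_iff.mpr (ip_pos_ne_zero₂ ha)
  have hb' : (0:ℝ) < ‖b‖ := norm_pos_iff.mpr (ip_pos_ne_zero₂ hb)
  rw [Real.sin_sub, sin_phi, sin_phi, cos_phi ha, cos_phi hb]
  have key := lagrange' u a b
  rw [show ip u u = ‖u‖^2 from (norm_sq_eq u).symm] at key
  field_simp
  linear_combination key

lemma cos_diff {u a b : Pt} (ha : 0 < ip u a) (hb : 0 < ip u b) :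
    Real.cos (phi u b - phi u a) = ip a b / (‖a‖ * ‖b‖) := by
  have hu' : (0:ℝ) < ‖u‖ := norm_pos_iff.mpr (ip_pos_ne_zero₁ ha)
  have ha' : (0:ℝ) < ‖a‖ := norm_pos_iff.mpr (ip_pos_ne_zero₂ ha)
  have hb' : (0:ℝ) < ‖b‖ := norm_pos_iff.mpr (ip_pos_ne_zero₂ hb)
  rw [Real.cos_sub, sin_phi, sin_phi, cos_phi ha, cos_phi hb]
  have key := lagrange u a b
  rw [show ip u u = ‖u‖^2 from (norm_sq_eq u).symm] at key
  field_simp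
  linear_combination key

lemma angle_eq_abs {u a b : Pt} (ha : 0 < ip u a) (hb : 0 < ip u b) :
    InnerProductGeometry.angle a b = |phi u b - phi u a| := by
  have hA := phi_lt ha
  have hB := phi_lt hb
  have habs : |phi u b - phi u a| ≤ π := by
    rw [abs_lt] at hA hB
    have := Real.pi_pos
    rw [abs_le]; constructor <;> nlinarith
  rw [InnerProductGeometry.angle, inner_eq, ← cos_diff ha hb, ← Real.cos_abs]
  exact Real.arccos_cos (abs_nonneg _) habs

lemma phi_le_phi {u a b : Pt} (ha : 0 < ip u a) (hb : 0 < ip u b) (hcr : 0 ≤ cr a b) :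
    phi u a ≤ phi u b := by
  by_contra hcon
  push_neg at hcon
  have hs : Real.sin (phi u b - phi u a) < 0 := by
    apply Real.sin_neg_of_neg_of_neg_pi_lt (by linarith)
    have hA := abs_lt.mp (phi_lt ha)
    have hB := abs_lt.mp (phi_lt hb)
    have := Real.pi_pos
    nlinarith
  rw [sin_diff ha hb] at hs
  have ha' : (0:ℝ) < ‖a‖ := norm_pos_iff.mpr (ip_pos_ne_zero₂ ha)
  have hb' : (0:ℝ) < ‖b‖ := norm_pos_iff.mpr (ip_pos_ne_zero₂ hb)
  have : 0 ≤ cr a b / (‖a‖ * ‖b‖) := by positivity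
  linarith

lemma angle_eq_sub {u a b : Pt} (ha : 0 < ip u a) (hb : 0 < ip u b) (hcr : 0 ≤ cr a b) :
    InnerProductGeometry.angle a b = phi u b - phi u a := by
  rw [angle_eq_abs ha hb, abs_of_nonneg (by linarith [phi_le_phi ha hb hcr])]

/-- small-angle inversion of sin -/
lemma inv_sin {A s : ℝ} (h0 : 0 ≤ A) (h1 : A < π / 2) (hs : Real.sin A ≤ s) (hs2 : s ≤ 1/2) :
    A ≤ (4/3) * s := by
  have hA1 : A ≤ 1 := by
    by_contra hcon
    push_neg at hcon
    have h34 : (3:ℝ)/4 < Real.sin 1 := by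
      have := Real.sin_gt_sub_cube (by norm_num : (0:ℝ) < 1)
      norm_num at this; linarith
    have hmono : Real.sin 1 ≤ Real.sin A := by
      apply (Real.strictMonoOn_sin.monotoneOn) _ _ (le_of_lt hcon)
      · have := Real.pi_gt_three
        constructor <;> [linarith; linarith]
      · have := Real.pi_gt_three
        constructor <;> [linarith; linarith]
    linarith
  rcases eq_or_lt_of_le h0 with rfl | h0'
  · have : (0:ℝ) ≤ s := by simpa using hs
    linarith
  have h2 := Real.sin_gt_sub_cube h0'
  have hsq : A^2 ≤ 1 := by nlinarith
  have hA3 : A^3 ≤ A := by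
    have : A^3 = A * A^2 := by ring
    nlinarith
  nlinarith


/-- edge vectors -/
def E (v : ℕ → Pt) (k : ℕ) : Pt := v (k+1) - v k

lemma cr_anti (x y : Pt) : cr x y = - cr y x := by simp only [cr]; ring

lemma cross3 (a b c : Pt) : cr a b • c + cr b c • a + cr c a • b = 0 := by
  ext i
  fin_cases i <;>
    simp only [PiLp.add_apply, PiLp.smul_apply, PiLp.zero_apply, smul_eq_mul, cr, Fin.isValue,
      Fin.mk_zero, Fin.mk_one] <;>
    ring

lemma edge_ne {n : ℕ} {v : ℕ → Pt} (hn : 20 ≤ n) (hv : Proper n v) {k : ℕ}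
    (h1 : 1 ≤ k) (h2 : k ≤ n - 1) : v k ≠ v (k+1) := by
  obtain ⟨ℓ, c, hj, hjc, hstrict⟩ := hv.2 (k+1) (by omega) (by omega)
  have hne : k ≠ cyc n (k+1) := by
    unfold cyc; split_ifs with h <;> omega
  have hk : ℓ (v k) < c := hstrict k (by omega) (by omega) (by omega) hne
  intro heq
  rw [heq, hj] at hk
  exact lt_irrefl _ hk

lemma E_ne_zero {n : ℕ} {v : ℕ → Pt} (hn : 20 ≤ n) (hv : Proper n v) {k : ℕ}
    (h1 : 1 ≤ k) (h2 : k ≤ n - 1) : E v k ≠ 0 :=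
  sub_ne_zero.mpr (Ne.symm (edge_ne hn hv h1 h2))

lemma cross_step {n : ℕ} {v : ℕ → Pt} (hn : 20 ≤ n) (hv : Proper n v) {k : ℕ}
    (h1 : 2 ≤ k) (h2 : k ≤ n - 2) (hpos : 0 < cr (E v (k-1)) (E v k)) :
    0 < cr (E v k) (E v (k+1)) := by
  obtain ⟨ℓ, c, hj, hjc, hstrict⟩ := hv.2 k (by omega) (by omega)
  have hcyc : cyc n k = k + 1 := by unfold cyc; split_ifs with h <;> omega
  rw [hcyc] at hjc hstrict
  have hx1 : ℓ (v (k-1)) < c := hstrict (k-1) (by omega) (by omega) (by omega) (by omega)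
  have hx2 : ℓ (v (k+2)) < c := hstrict (k+2) (by omega) (by omega) (by omega) (by omega)
  set w := E v k with hw
  set x1 := v (k-1) - v k with hx1d
  set x2 := v (k+2) - v k with hx2d
  have hlw : ℓ w = 0 := by rw [hw, E, map_sub, hj, hjc, sub_self]
  have hl1 : ℓ x1 < 0 := by rw [hx1d, map_sub, hj]; linarith
  have hl2 : ℓ x2 < 0 := by rw [hx2d, map_sub, hj]; linarith
  have h3 := cross3 x1 x2 w
  have happ := congrArg ℓ h3
  simp only [map_add, map_smul, map_zero, smul_eq_mul, hlw, mul_zero, zero_add] at happ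
  -- happ : cr x2 w * ℓ x1 + cr w x1 * ℓ x2 = 0
  have hcr1 : cr w x1 = cr (E v (k-1)) (E v k) := by
    rw [hw, hx1d]
    have hk1 : k - 1 + 1 = k := by omega
    simp only [E, cr, PiLp.sub_apply, hk1]
    ring
  have hcr2 : cr w x2 = cr (E v k) (E v (k+1)) := by
    rw [hw, hx2d]
    simp only [E, cr, PiLp.sub_apply]
    ring
  have hxw : cr x2 w = - cr w x2 := cr_anti x2 w
  rw [hxw, hcr1, hcr2] at happ
  show 0 < cr (E v k) (E v (k+1))
  by_contra hcon
  push_neg at hcon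
  have h5 : cr (E v (k-1)) (E v k) * ℓ x2 < 0 := mul_neg_of_pos_of_neg hpos hl2
  nlinarith [mul_nonneg (neg_nonneg.mpr hcon) (neg_nonneg.mpr hl1.le)]

lemma cross_pos {n : ℕ} {v : ℕ → Pt} (hn : 20 ≤ n) (hv : Proper n v) :
    ∀ k, 2 ≤ k → k ≤ n - 1 → 0 < cr (E v (k-1)) (E v k) := by
  intro k hk
  induction k, hk using Nat.le_induction with
  | base =>
    intro _
    have heq : cr (E v 1) (E v 2) = tdet (v 1) (v 2) (v 3) := by
      simp only [E, cr, tdet, PiLp.sub_apply, Nat.reduceAdd]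
      ring
    show 0 < cr (E v 1) (E v 2)
    rw [heq]; exact hv.1
  | succ k hk ih =>
    intro hk1
    have hprev : 0 < cr (E v (k-1)) (E v k) := ih (by omega)
    have := cross_step hn hv (by omega : 2 ≤ k) (by omega : k ≤ n - 2) hprev
    simpa using this

/-- telescoping sums of edges -/
lemma tele (v : ℕ → Pt) : ∀ (a b : ℕ), a ≤ b + 1 →
    ∑ k ∈ Finset.Icc a b, E v k = v (b+1) - v a := by
  intro a b
  induction b with
  | zero =>
    intro hab
    interval_cases a
    · simp [E]
    · simp
  | succ b ih =>
    intro hab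
    rcases Nat.lt_or_ge (b+1) a with h | h
    · have ha : a = b + 2 := by omega
      subst ha
      simp [Finset.Icc_eq_empty_of_lt (by omega : b + 2 > b + 1)]
    · rw [Finset.sum_Icc_succ_top (by omega) , ih (by omega), E]
      abel

/-- `ip u` and `cr u` as linear maps -/
def ipL (u : Pt) : Pt →ₗ[ℝ] ℝ where
  toFun x := ip u x
  map_add' x y := by simp only [ip, PiLp.add_apply]; ring
  map_smul' r x := by simp only [ip, PiLp.smul_apply, smul_eq_mul, RingHom.id_apply]; ring

def crL (u : Pt) : Pt →ₗ[ℝ] ℝ where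
  toFun x := cr u x
  map_add' x y := by simp only [cr, PiLp.add_apply]; ring
  map_smul' r x := by simp only [cr, PiLp.smul_apply, smul_eq_mul, RingHom.id_apply]; ring

lemma ip_sum (u : Pt) (s : Finset ℕ) (f : ℕ → Pt) :
    ip u (∑ k ∈ s, f k) = ∑ k ∈ s, ip u (f k) :=
  map_sum (ipL u) f s

lemma cr_sum (u : Pt) (s : Finset ℕ) (f : ℕ → Pt) :
    cr u (∑ k ∈ s, f k) = ∑ k ∈ s, cr u (f k) :=
  map_sum (crL u) f s

/-- edge length decay -/
lemma Edec {n : ℕ} {v : ℕ → Pt} (hn : 20 ≤ n) (hedge : EdgeDecr n v ((n:ℝ)^2)) {k : ℕ}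
    (h1 : 1 ≤ k) (h2 : k + 1 ≤ n - 1) : ‖E v (k+1)‖ ≤ ‖E v k‖ / (n:ℝ)^2 := by
  have h := hedge k h1 (by omega)
  have hd1 : dist (v (k+1)) (v (k+2)) = ‖E v (k+1)‖ := by
    rw [dist_eq_norm, E, norm_sub_rev]
  have hd2 : dist (v k) (v (k+1)) = ‖E v k‖ := by
    rw [dist_eq_norm, E, norm_sub_rev]
  rw [hd1, hd2] at h
  have hn2 : (0:ℝ) < (n:ℝ)^2 := by positivity
  rw [le_div_iff₀ hn2]
  linarith

lemma tail_sum {n : ℕ} {v : ℕ → Pt} (hn : 20 ≤ n) (hedge : EdgeDecr n v ((n:ℝ)^2)) {m : ℕ}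
    (h1 : 1 ≤ m) : ∀ q, m ≤ q → q ≤ n - 1 →
    ∑ k ∈ Finset.Icc (m+1) q, ‖E v k‖ ≤ 2/(n:ℝ)^2 * ‖E v m‖ - 2/(n:ℝ)^2 * ‖E v q‖ := by
  intro q hq
  induction q, hq using Nat.le_induction with
  | base =>
    intro _
    simp [Finset.Icc_eq_empty_of_lt (by omega : m + 1 > m)]
  | succ q hq ih =>
    intro hq1
    have hnR : (20:ℝ) ≤ (n:ℝ) := by exact_mod_cast hn
    have hn2 : (400:ℝ) ≤ (n:ℝ)^2 := by nlinarith
    have hd := Edec hn hedge (by omega : 1 ≤ q) (by omega : q + 1 ≤ n - 1)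
    have hih := ih (by omega)
    rw [Finset.sum_Icc_succ_top (by omega)]
    have hnn : (0:ℝ) ≤ ‖E v q‖ := norm_nonneg _
    have hnn1 : (0:ℝ) ≤ ‖E v (q+1)‖ := norm_nonneg _
    have hq2 : (0:ℝ) < (n:ℝ)^2 := by positivity
    have hxt : ‖E v (q+1)‖ * (n:ℝ)^2 ≤ ‖E v q‖ := by
      rw [← le_div_iff₀ hq2]; exact hd
    have hnum : 0 ≤ 2*‖E v q‖ - ‖E v (q+1)‖*(n:ℝ)^2 - 2*‖E v (q+1)‖ := by
      nlinarith [mul_nonneg hnn1 (by linarith : (0:ℝ) ≤ (n:ℝ)^2 - 400)]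
    have heq : 2/(n:ℝ)^2 * ‖E v q‖ - (‖E v (q+1)‖ + 2/(n:ℝ)^2 * ‖E v (q+1)‖)
        = (2*‖E v q‖ - ‖E v (q+1)‖*(n:ℝ)^2 - 2*‖E v (q+1)‖)/(n:ℝ)^2 := by
      field_simp; ring
    have key : ‖E v (q+1)‖ + 2/(n:ℝ)^2 * ‖E v (q+1)‖ ≤ 2/(n:ℝ)^2 * ‖E v q‖ := by
      have h0 := div_nonneg hnum (le_of_lt hq2)
      linarith [heq ▸ h0]
    linarith [hih, key]

lemma tail_sum' {n : ℕ} {v : ℕ → Pt} (hn : 20 ≤ n) (hedge : EdgeDecr n v ((n:ℝ)^2)) {m q : ℕ}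
    (h1 : 1 ≤ m) (hq : m ≤ q) (hq1 : q ≤ n - 1) :
    ∑ k ∈ Finset.Icc (m+1) q, ‖E v k‖ ≤ 2/(n:ℝ)^2 * ‖E v m‖ := by
  have := tail_sum hn hedge h1 q hq hq1
  have : (0:ℝ) ≤ 2/(n:ℝ)^2 * ‖E v q‖ := by positivity
  linarith [tail_sum hn hedge h1 q hq hq1]


lemma beta_eq (a b c : Pt) : beta a b c = InnerProductGeometry.angle (b - a) (c - b) := by
  have h : EuclideanGeometry.angle a b c = InnerProductGeometry.angle (a - b) (c - b) := by
    rw [EuclideanGeometry.angle]; norm_num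
  rw [beta, h, ← InnerProductGeometry.angle_neg_left, neg_sub]

lemma beta_nonneg (a b c : Pt) : 0 ≤ beta a b c := by
  rw [beta]; linarith [EuclideanGeometry.angle_le_pi a b c]

end Stmt13Aux

open Stmt13Aux in
set_option maxHeartbeats 2000000 in
/-- Estimates (1) and (2) of Lemma 12 of the paper: bounds on `β(v₁, v_p, v_n)`
in terms of the angle sums of a proper `(1/n)`-thin sequence with
`n²`-decreasing edge sequence, for `n ≥ 20`. -/
theorem stmt13 (n : ℕ) (hn : 20 ≤ n) (v : ℕ → Pt) (hv : Proper n v)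
    (hthin : Thin n v (1 / n)) (hedge : EdgeDecr n v ((n : ℝ) ^ 2))
    (p : ℕ) (hp1 : 1 < p) (hpn : p < n) :
    beta (v 1) (v p) (v n) ≤
        (∑ k ∈ Finset.Icc 2 p, beta (v (k - 1)) (v k) (v (k + 1))) +
          0.1 * ∑ k ∈ Finset.Icc (p + 1) (n - 1), beta (v (k - 1)) (v k) (v (k + 1)) ∧
      0.9 * ∑ k ∈ Finset.Icc 2 p, beta (v (k - 1)) (v k) (v (k + 1)) ≤
        beta (v 1) (v p) (v n) := by
  classical
  set B : ℕ → ℝ := fun k => beta (v (k - 1)) (v k) (v (k + 1)) with hB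
  have hnR : (20:ℝ) ≤ (n:ℝ) := by exact_mod_cast hn
  have hn2 : (400:ℝ) ≤ (n:ℝ)^2 := by nlinarith
  have hn2p : (0:ℝ) < (n:ℝ)^2 := by linarith
  have hpi : (3:ℝ) < π := Real.pi_gt_three
  have hBnn : ∀ k, 0 ≤ B k := fun k => beta_nonneg _ _ _
  have hBeq : ∀ k, 2 ≤ k → B k = InnerProductGeometry.angle (E v (k-1)) (E v k) := by
    intro k hk
    have hk1 : k - 1 + 1 = k := by omega
    rw [hB]
    simp only
    rw [beta_eq]
    unfold E
    rw [hk1]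
  set Stot := ∑ k ∈ Finset.Icc 2 (n-1), B k with hStotd
  have hStot_le : Stot ≤ 1/(n:ℝ) := hthin
  have h120 : (1:ℝ)/(n:ℝ) ≤ 1/20 := by
    rw [div_le_div_iff₀ (by linarith) (by norm_num)]; linarith
  have hStot20 : Stot ≤ 1/20 := le_trans hStot_le h120
  have hB_le : ∀ k, 2 ≤ k → k ≤ n-1 → B k ≤ Stot := fun k h2 h3 =>
    Finset.single_le_sum (fun i _ => hBnn i) (Finset.mem_Icc.mpr ⟨h2, h3⟩)
  set S : ℕ → ℝ := fun k => ∑ j ∈ Finset.Icc 2 k, B j with hS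
  have hS_nn : ∀ k, 0 ≤ S k := fun k => Finset.sum_nonneg (fun i _ => hBnn i)
  have hS_mono : ∀ j k, j ≤ k → S j ≤ S k := fun j k hjk =>
    Finset.sum_le_sum_of_subset_of_nonneg (Finset.Icc_subset_Icc_right hjk)
      (fun i _ _ => hBnn i)
  have hS_le : ∀ k, k ≤ n-1 → S k ≤ Stot := fun k hk => hS_mono k (n-1) hk
  have hS1 : S 1 = 0 := by
    rw [hS]; simp
  set u := E v 1 with hu
  have hu_ne : u ≠ 0 := E_ne_zero hn hv (le_refl 1) (by omega)
  have hu_pos : 0 < ‖u‖ := norm_pos_iff.mpr hu_ne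
  have hEne : ∀ k, 1 ≤ k → k ≤ n-1 → E v k ≠ 0 := fun k h1 h2 => E_ne_zero hn hv h1 h2
  have key : ∀ k, 1 ≤ k → k ≤ n - 1 → 0 < ip u (E v k) ∧ phi u (E v k) = S k := by
    intro k hk
    induction k, hk using Nat.le_induction with
    | base =>
      intro _
      refine ⟨ip_self_pos hu_ne, ?_⟩
      have hcru : cr u u = 0 := by simp only [cr]; ring
      rw [phi, hcru, zero_div, Real.arcsin_zero, hS1]
    | succ k hk ih =>
      intro hk1
      obtain ⟨hipw, hphiw⟩ := ih (by omega)
      set w := E v k with hwd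
      set b := E v (k+1) with hbd
      have hw_ne : w ≠ 0 := hEne k (by omega) (by omega)
      have hb_ne : b ≠ 0 := hEne (k+1) (by omega) (by omega)
      have hw_pos : 0 < ‖w‖ := norm_pos_iff.mpr hw_ne
      have hb_pos : 0 < ‖b‖ := norm_pos_iff.mpr hb_ne
      have hcr_wb : 0 < cr w b := by
        have := cross_pos hn hv (k+1) (by omega) (by omega)
        simpa using this
      have hang : InnerProductGeometry.angle w b = B (k+1) := by
        rw [hBeq (k+1) (by omega)]
        congr 1
      have hBk1_nn : 0 ≤ B (k+1) := hBnn (k+1)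
      have hBk1_le : B (k+1) ≤ 1/20 := le_trans (hB_le (k+1) (by omega) (by omega)) hStot20
      have hSk_nn : 0 ≤ S k := hS_nn k
      have hSk_le : S k ≤ 1/20 := le_trans (hS_le k (by omega)) hStot20
      -- inner products via angles
      have hipwb : ip w b = Real.cos (B (k+1)) * (‖w‖ * ‖b‖) := by
        rw [← hang, ← inner_eq]
        exact (InnerProductGeometry.cos_angle_mul_norm_mul_norm w b).symm
      have hcos1 : (0.99:ℝ) ≤ Real.cos (B (k+1)) := by
        have := Real.one_sub_sq_div_two_le_cos (x := B (k+1))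
        nlinarith
      have hipwb_lb : (0.99:ℝ) * (‖w‖ * ‖b‖) ≤ ip w b := by
        rw [hipwb]
        apply mul_le_mul_of_nonneg_right hcos1 (by positivity)
      have hipuw : ip u w = Real.cos (S k) * (‖u‖ * ‖w‖) := by
        have := cos_phi hipw
        rw [hphiw] at this
        field_simp at this
        linarith [this]
      have hcos2 : (0.99:ℝ) ≤ Real.cos (S k) := by
        have := Real.one_sub_sq_div_two_le_cos (x := S k)
        nlinarith
      have hipuw_lb : (0.99:ℝ) * (‖u‖ * ‖w‖) ≤ ip u w := by
        rw [hipuw]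
        apply mul_le_mul_of_nonneg_right hcos2 (by positivity)
      have hcruw : cr u w = Real.sin (S k) * (‖u‖ * ‖w‖) := by
        have := sin_phi u w
        rw [hphiw] at this
        field_simp at this
        linarith [this]
      have hsin_nn : 0 ≤ Real.sin (S k) := Real.sin_nonneg_of_nonneg_of_le_pi hSk_nn (by linarith)
      have hsin_le : Real.sin (S k) ≤ 1/20 := le_trans (Real.sin_le hSk_nn) hSk_le
      have hcruw_nn : 0 ≤ cr u w := by rw [hcruw]; positivity
      have hcruw_le : cr u w ≤ (1/20) * (‖u‖ * ‖w‖) := by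
        rw [hcruw]
        apply mul_le_mul_of_nonneg_right hsin_le (by positivity)
      have hcrwb_le : cr w b ≤ ‖w‖ * ‖b‖ := le_trans (le_abs_self _) (cr_le w b)
      have hmix := mixed u w b
      have hww : 0 < ip w w := ip_self_pos hw_ne
      have hprod_lb : (0.99:ℝ) * (‖u‖ * ‖w‖) * ((0.99:ℝ) * (‖w‖ * ‖b‖)) ≤ ip u w * ip w b := by
        apply mul_le_mul hipuw_lb hipwb_lb (by positivity)
        linarith [hipuw_lb]
      have hcr_prod_ub : cr u w * cr w b ≤ (1/20) * (‖u‖ * ‖w‖) * (‖w‖ * ‖b‖) := by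
        apply mul_le_mul hcruw_le hcrwb_le hcr_wb.le (by positivity)
      have hP : (0:ℝ) < (‖u‖ * ‖w‖) * (‖w‖ * ‖b‖) := by positivity
      have hipb : 0 < ip u b := by
        by_contra hc
        push_neg at hc
        have h1 : ip u b * ip w w ≤ 0 := mul_nonpos_of_nonpos_of_nonneg hc hww.le
        nlinarith
      refine ⟨hipb, ?_⟩
      have hstep := angle_eq_sub hipw hipb hcr_wb.le
      rw [hang, hphiw] at hstep
      have hSsucc : S (k+1) = S k + B (k+1) := by
        rw [hS]
        simp only
        rw [Finset.sum_Icc_succ_top (by omega : 2 ≤ k + 1)]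
      rw [hSsucc]
      linarith [hstep]
  -- chord estimates
  have hpn1 : p ≤ n - 1 := by omega
  set T := ∑ k ∈ Finset.Icc (p+1) (n-1), B k with hTd
  have hT_nn : 0 ≤ T := Finset.sum_nonneg (fun i _ => hBnn i)
  have hT_le : T ≤ 1/20 := by
    refine le_trans ?_ hStot20
    rw [hStotd, hTd]
    exact Finset.sum_le_sum_of_subset_of_nonneg
      (Finset.Icc_subset_Icc_left (by omega)) (fun i _ _ => hBnn i)
  have hSdiff : ∀ k, p ≤ k → S k - S p = ∑ j ∈ Finset.Icc (p+1) k, B j := by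
    intro k hk
    have h2 : Finset.Icc (p+1) k = Finset.Ioc p k := Finset.Icc_add_one_left_eq_Ioc p k
    have h3 := Finset.sum_Ioc_consecutive B (by omega : 1 ≤ p) hk
    rw [hS]; simp only
    rw [show Finset.Icc 2 k = Finset.Ioc 1 k from Finset.Icc_add_one_left_eq_Ioc 1 k, show Finset.Icc 2 p = Finset.Ioc 1 p from Finset.Icc_add_one_left_eq_Ioc 1 p, h2, ← h3]; ring
  have hSdiff_nn : ∀ k, p ≤ k → 0 ≤ S k - S p := fun k hk => sub_nonneg.mpr (hS_mono p k hk)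
  have hSdiff_le : ∀ k, p ≤ k → k ≤ n-1 → S k - S p ≤ T := by
    intro k hk hk1
    rw [hSdiff k hk, hTd]
    exact Finset.sum_le_sum_of_subset_of_nonneg
      (Finset.Icc_subset_Icc_right hk1) (fun i _ _ => hBnn i)
  have hc1 : v p - v 1 = ∑ k ∈ Finset.Icc 1 (p-1), E v k := by
    have h := tele v 1 (p-1) (by omega)
    rw [show p - 1 + 1 = p from by omega] at h
    exact h.symm
  have hc2 : v n - v p = ∑ k ∈ Finset.Icc p (n-1), E v k := by
    have h := tele v p (n-1) (by omega)
    rw [show n - 1 + 1 = n from by omega] at h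
    exact h.symm
  have hipc1 : 0 < ip u (v p - v 1) := by
    rw [hc1, ip_sum]
    apply Finset.sum_pos
    · intro i hi
      rw [Finset.mem_Icc] at hi
      exact (key i hi.1 (by omega)).1
    · exact Finset.nonempty_Icc.mpr (by omega)
  have hipc2 : 0 < ip u (v n - v p) := by
    rw [hc2, ip_sum]
    apply Finset.sum_pos
    · intro i hi
      rw [Finset.mem_Icc] at hi
      exact (key i (by omega) hi.2).1
    · exact Finset.nonempty_Icc.mpr (by omega)
  have hEpos : ∀ k, 1 ≤ k → k ≤ n-1 → (0:ℝ) < ‖E v k‖ :=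
    fun k h1 h2 => norm_pos_iff.mpr (hEne k h1 h2)
  have h2n200 : 2/(n:ℝ)^2 ≤ 1/200 := by
    rw [div_le_div_iff₀ hn2p (by norm_num)]; linarith
  have hterm1 : ∀ k, 1 ≤ k → k ≤ n-1 → cr u (E v k) = Real.sin (S k) * (‖u‖ * ‖E v k‖) := by
    intro k h1 h2
    obtain ⟨hip, hphi⟩ := key k h1 h2
    have hsp := sin_phi u (E v k)
    rw [hphi] at hsp
    have hk := hEpos k h1 h2
    have hne1 : ‖u‖ ≠ 0 := ne_of_gt hu_pos
    have hne2 : ‖E v k‖ ≠ 0 := ne_of_gt hk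
    field_simp at hsp
    linarith [hsp]
  have hcr1_nn : 0 ≤ cr u (v p - v 1) := by
    rw [hc1, cr_sum]
    apply Finset.sum_nonneg
    intro i hi
    rw [Finset.mem_Icc] at hi
    rw [hterm1 i hi.1 (by omega)]
    have hs : 0 ≤ Real.sin (S i) :=
      Real.sin_nonneg_of_nonneg_of_le_pi (hS_nn i) (by linarith [hS_le i (by omega)])
    positivity
  have hcr1_ub : cr u (v p - v 1) ≤ S p * ‖u‖ * (2/(n:ℝ)^2 * ‖u‖) := by
    rw [hc1, cr_sum]
    have hsplit : Finset.Icc 1 (p-1) = insert 1 (Finset.Icc 2 (p-1)) := by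
      ext x; simp only [Finset.mem_Icc, Finset.mem_insert]; omega
    rw [hsplit, Finset.sum_insert (by simp)]
    have ht1 : cr u (E v 1) = 0 := by
      rw [hterm1 1 le_rfl (by omega), hS1]
      simp
    rw [ht1, zero_add]
    have hstep : ∀ i ∈ Finset.Icc 2 (p-1), cr u (E v i) ≤ (S p * ‖u‖) * ‖E v i‖ := by
      intro i hi
      rw [Finset.mem_Icc] at hi
      rw [hterm1 i (by omega) (by omega)]
      have hsin_le : Real.sin (S i) ≤ S p :=
        le_trans (Real.sin_le (hS_nn i)) (hS_mono i p (by omega))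
      have hE := hEpos i (by omega) (by omega)
      calc Real.sin (S i) * (‖u‖ * ‖E v i‖) ≤ S p * (‖u‖ * ‖E v i‖) :=
            mul_le_mul_of_nonneg_right hsin_le (by positivity)
      _ = (S p * ‖u‖) * ‖E v i‖ := by ring
    calc ∑ i ∈ Finset.Icc 2 (p-1), cr u (E v i)
        ≤ ∑ i ∈ Finset.Icc 2 (p-1), (S p * ‖u‖) * ‖E v i‖ := Finset.sum_le_sum hstep
    _ = (S p * ‖u‖) * ∑ i ∈ Finset.Icc 2 (p-1), ‖E v i‖ := by rw [Finset.mul_sum]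
    _ ≤ (S p * ‖u‖) * (2/(n:ℝ)^2 * ‖E v 1‖) := by
        apply mul_le_mul_of_nonneg_left _ (mul_nonneg (hS_nn p) (norm_nonneg _))
        exact tail_sum' hn hedge le_rfl (by omega) (by omega)
    _ = S p * ‖u‖ * (2/(n:ℝ)^2 * ‖u‖) := by rw [← hu]
  have hrest1 : ‖v p - v 2‖ ≤ 2/(n:ℝ)^2 * ‖u‖ := by
    have h := tele v 2 (p-1) (by omega)
    rw [show p - 1 + 1 = p from by omega] at h
    rw [← h]
    refine le_trans (norm_sum_le _ _) ?_
    have := tail_sum' hn hedge (le_refl 1) (by omega : 1 ≤ p - 1) (by omega)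
    rw [← hu] at this
    exact this
  have hnorm1 : ‖u‖/2 ≤ ‖v p - v 1‖ := by
    have hueq : u = (v p - v 1) - (v p - v 2) := by
      rw [hu]; unfold E; norm_num
    have htri : ‖u‖ ≤ ‖v p - v 1‖ + ‖v p - v 2‖ := by
      rw [hueq]; exact norm_sub_le _ _
    have h1 : 2/(n:ℝ)^2 * ‖u‖ ≤ (1/200) * ‖u‖ :=
      mul_le_mul_of_nonneg_right h2n200 (norm_nonneg _)
    linarith
  set A := phi u (v p - v 1) with hAd
  have hnc1 : 0 < ‖v p - v 1‖ := by linarith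
  have hA0 : 0 ≤ A := by
    rw [hAd, phi]
    exact Real.arcsin_nonneg.mpr (div_nonneg hcr1_nn (by positivity))
  have hAlt : A < π/2 := by
    have := abs_lt.mp (phi_lt hipc1)
    exact this.2
  have hsinA_le : Real.sin A ≤ 4/(n:ℝ)^2 * S p := by
    rw [hAd, sin_phi, div_le_iff₀ (by positivity)]
    have e0 : (0:ℝ) ≤ 4/(n:ℝ)^2 * S p := by
      have := hS_nn p; positivity
    have e1 : (4/(n:ℝ)^2 * S p) * (‖u‖ * (‖u‖/2)) ≤ (4/(n:ℝ)^2 * S p) * (‖u‖ * ‖v p - v 1‖) := by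
      apply mul_le_mul_of_nonneg_left _ e0
      exact mul_le_mul_of_nonneg_left hnorm1 (norm_nonneg u)
    have e2 : S p * ‖u‖ * (2/(n:ℝ)^2 * ‖u‖) = (4/(n:ℝ)^2 * S p) * (‖u‖ * (‖u‖/2)) := by ring
    linarith [hcr1_ub, e1]
  have hs_small1 : 4/(n:ℝ)^2 * S p ≤ 1/2 := by
    have h4 : 4/(n:ℝ)^2 ≤ 1/100 := by rw [div_le_div_iff₀ hn2p (by norm_num)]; linarith
    have h5 := hS_nn p
    have h6 : S p ≤ 1/20 := le_trans (hS_le p hpn1) hStot20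
    nlinarith
  have hA_le : A ≤ (1/75) * S p := by
    have h := inv_sin hA0 hAlt hsinA_le hs_small1
    have h16 : (16:ℝ)/(3*(n:ℝ)^2) ≤ 1/75 := by
      rw [div_le_div_iff₀ (by positivity) (by norm_num)]; nlinarith
    have h17 : (4:ℝ)/3 * (4/(n:ℝ)^2 * S p) = (16/(3*(n:ℝ)^2)) * S p := by ring
    have h18 : (16/(3*(n:ℝ)^2)) * S p ≤ (1/75) * S p :=
      mul_le_mul_of_nonneg_right h16 (hS_nn p)
    linarith
  -- chord c2
  obtain ⟨hipp, hphip⟩ := key p (by omega) hpn1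
  have hwp : 0 < ‖E v p‖ := hEpos p (by omega) hpn1
  have hterm2 : ∀ k, p ≤ k → k ≤ n-1 →
      cr (E v p) (E v k) = Real.sin (S k - S p) * (‖E v p‖ * ‖E v k‖) := by
    intro k h1 h2
    obtain ⟨hip, hphi⟩ := key k (by omega) h2
    have hsd := sin_diff hipp hip
    rw [hphi, hphip] at hsd
    have hE := hEpos k (by omega) h2
    have hne1 : ‖E v p‖ ≠ 0 := ne_of_gt hwp
    have hne2 : ‖E v k‖ ≠ 0 := ne_of_gt hE
    field_simp at hsd
    linarith [hsd]
  have hcr2_nn : 0 ≤ cr (E v p) (v n - v p) := by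
    rw [hc2, cr_sum]
    apply Finset.sum_nonneg
    intro i hi
    rw [Finset.mem_Icc] at hi
    rw [hterm2 i hi.1 hi.2]
    have hs : 0 ≤ Real.sin (S i - S p) := by
      apply Real.sin_nonneg_of_nonneg_of_le_pi (hSdiff_nn i hi.1)
      linarith [hSdiff_le i hi.1 hi.2]
    positivity
  have hcr2_ub : cr (E v p) (v n - v p) ≤ T * ‖E v p‖ * (2/(n:ℝ)^2 * ‖E v p‖) := by
    rw [hc2, cr_sum]
    have hsplit : Finset.Icc p (n-1) = insert p (Finset.Icc (p+1) (n-1)) := by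
      ext x; simp only [Finset.mem_Icc, Finset.mem_insert]; omega
    rw [hsplit, Finset.sum_insert (by simp)]
    have htp : cr (E v p) (E v p) = 0 := by simp only [cr]; ring
    rw [htp, zero_add]
    have hstep : ∀ i ∈ Finset.Icc (p+1) (n-1), cr (E v p) (E v i) ≤ (T * ‖E v p‖) * ‖E v i‖ := by
      intro i hi
      rw [Finset.mem_Icc] at hi
      rw [hterm2 i (by omega) hi.2]
      have hsin_le : Real.sin (S i - S p) ≤ T :=
        le_trans (Real.sin_le (hSdiff_nn i (by omega))) (hSdiff_le i (by omega) hi.2)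
      have hE := hEpos i (by omega) hi.2
      calc Real.sin (S i - S p) * (‖E v p‖ * ‖E v i‖) ≤ T * (‖E v p‖ * ‖E v i‖) :=
            mul_le_mul_of_nonneg_right hsin_le (by positivity)
      _ = (T * ‖E v p‖) * ‖E v i‖ := by ring
    calc ∑ i ∈ Finset.Icc (p+1) (n-1), cr (E v p) (E v i)
        ≤ ∑ i ∈ Finset.Icc (p+1) (n-1), (T * ‖E v p‖) * ‖E v i‖ := Finset.sum_le_sum hstep
    _ = (T * ‖E v p‖) * ∑ i ∈ Finset.Icc (p+1) (n-1), ‖E v i‖ := by rw [Finset.mul_sum]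
    _ ≤ (T * ‖E v p‖) * (2/(n:ℝ)^2 * ‖E v p‖) := by
        apply mul_le_mul_of_nonneg_left _ (mul_nonneg hT_nn (norm_nonneg _))
        exact tail_sum' hn hedge (by omega : 1 ≤ p) (by omega) (by omega)
    _ = T * ‖E v p‖ * (2/(n:ℝ)^2 * ‖E v p‖) := by ring
  have hrest2 : ‖v n - v (p+1)‖ ≤ 2/(n:ℝ)^2 * ‖E v p‖ := by
    have h := tele v (p+1) (n-1) (by omega)
    rw [show n - 1 + 1 = n from by omega] at h
    rw [← h]
    refine le_trans (norm_sum_le _ _) ?_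
    exact tail_sum' hn hedge (by omega : 1 ≤ p) (by omega) (by omega)
  have hnorm2 : ‖E v p‖/2 ≤ ‖v n - v p‖ := by
    have hueq : E v p = (v n - v p) - (v n - v (p+1)) := by
      unfold E; abel
    have htri : ‖E v p‖ ≤ ‖v n - v p‖ + ‖v n - v (p+1)‖ := by
      rw [hueq]; exact norm_sub_le _ _
    have h1 : 2/(n:ℝ)^2 * ‖E v p‖ ≤ (1/200) * ‖E v p‖ :=
      mul_le_mul_of_nonneg_right h2n200 (norm_nonneg _)
    linarith
  set Y := phi u (v n - v p) with hYd
  have hnc2 : 0 < ‖v n - v p‖ := by linarith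
  have hYge : S p ≤ Y := by
    have h := phi_le_phi hipp hipc2 hcr2_nn
    rw [hphip] at h
    exact h
  have hYlt : Y < π/2 := by
    have := abs_lt.mp (phi_lt hipc2)
    exact this.2
  have hsinD : Real.sin (Y - S p) = cr (E v p) (v n - v p) / (‖E v p‖ * ‖v n - v p‖) := by
    have h := sin_diff hipp hipc2
    rw [hphip] at h
    exact h
  have hsinD_le : Real.sin (Y - S p) ≤ 4/(n:ℝ)^2 * T := by
    rw [hsinD, div_le_iff₀ (by positivity)]
    have e0 : (0:ℝ) ≤ 4/(n:ℝ)^2 * T := by positivity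
    have e1 : (4/(n:ℝ)^2 * T) * (‖E v p‖ * (‖E v p‖/2)) ≤ (4/(n:ℝ)^2 * T) * (‖E v p‖ * ‖v n - v p‖) := by
      apply mul_le_mul_of_nonneg_left _ e0
      exact mul_le_mul_of_nonneg_left hnorm2 (norm_nonneg _)
    have e2 : T * ‖E v p‖ * (2/(n:ℝ)^2 * ‖E v p‖) = (4/(n:ℝ)^2 * T) * (‖E v p‖ * (‖E v p‖/2)) := by ring
    linarith [hcr2_ub, e1]
  have hs_small2 : 4/(n:ℝ)^2 * T ≤ 1/2 := by
    have h4 : 4/(n:ℝ)^2 ≤ 1/100 := by rw [div_le_div_iff₀ hn2p (by norm_num)]; linarith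
    nlinarith
  have hD_le : Y - S p ≤ (1/75) * T := by
    have hD0 : 0 ≤ Y - S p := by linarith
    have hDlt : Y - S p < π/2 := by linarith [hS_nn p]
    have h := inv_sin hD0 hDlt hsinD_le hs_small2
    have h16 : (16:ℝ)/(3*(n:ℝ)^2) ≤ 1/75 := by
      rw [div_le_div_iff₀ (by positivity) (by norm_num)]; nlinarith
    have h17 : (4:ℝ)/3 * (4/(n:ℝ)^2 * T) = (16/(3*(n:ℝ)^2)) * T := by ring
    have h18 : (16/(3*(n:ℝ)^2)) * T ≤ (1/75) * T :=
      mul_le_mul_of_nonneg_right h16 hT_nn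
    linarith
  -- conclusion
  have hbeta : beta (v 1) (v p) (v n) = |Y - A| := by
    rw [beta_eq, hYd, hAd]
    exact angle_eq_abs hipc1 hipc2
  have hYA_nn : 0 ≤ Y - A := by
    have := hS_nn p
    linarith
  have hSp_eq : ∑ k ∈ Finset.Icc 2 p, B k = S p := rfl
  rw [hbeta, abs_of_nonneg hYA_nn, hSp_eq]
  have h01 : (0.1:ℝ) = 1/10 := by norm_num
  have h09 : (0.9:ℝ) = 9/10 := by norm_num
  rw [h01, h09]
  constructor
  · have := hS_nn p
    linarith
  · have := hS_nn p
    linarith
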